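/- Let q = 2^m with m ≥ 2, let 1 ≤ k ≤ 2^m, and let B be a nonempty collection of k-subsets of PG(1, 2^m) invariant under the action of PGL_2(GF(2^m)). Then the 2-rank of the incidence matrix of the incidence structure (PG(1, 2^m), B) equals 2^m if k is even, and 2^m + 1 if k is odd. -/

import Mathlib

/-- The action of an invertible matrix on the projective line `PG(1,K)`, realized as
the projectivization of `K^2`. -/
noncomputable def pglAct {K : Type*} [Field K] (M : GL (Fin 2) K) :
    Projectivization K (Fin 2 → K) → Projectivization K (Fin 2 → K) :=
  Projectivization.map ((Matrix.GeneralLinearGroup.toLin M).toLinearEquiv.toLinearMap)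
    (Matrix.GeneralLinearGroup.toLin M).toLinearEquiv.injective

theorem projmap_congr {K V W : Type*} [Field K] [AddCommGroup V] [Module K V]
    [AddCommGroup W] [Module K W] {f g : V →ₗ[K] W} (h : f = g)
    (hf : Function.Injective f) (hg : Function.Injective g) (x : Projectivization K V) :
    Projectivization.map f hf x = Projectivization.map g hg x := by subst h; rfl

theorem projmk_congr {K V : Type*} [Field K] [AddCommGroup V] [Module K V]
    {v w : V} (h : v = w) (hv : v ≠ 0) (hw : w ≠ 0) :
    Projectivization.mk K v hv = Projectivization.mk K w hw := by subst h; rfl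

/-- equivalence of projectivizations induced by a linear equivalence -/
def projCongr {K V W : Type*} [Field K] [AddCommGroup V] [Module K V]
    [AddCommGroup W] [Module K W] (e : V ≃ₗ[K] W) :
    Projectivization K V ≃ Projectivization K W where
  toFun := Projectivization.map e.toLinearMap e.injective
  invFun := Projectivization.map e.symm.toLinearMap e.symm.injective
  left_inv x := by
    have h : Projectivization.map e.symm.toLinearMap e.symm.injective
        (Projectivization.map e.toLinearMap e.injective
          (Projectivization.mk K x.rep x.rep_nonzero)) =
        Projectivization.mk K x.rep x.rep_nonzero := by
      rw [Projectivization.map_mk e.toLinearMap e.injective x.rep x.rep_nonzero,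
        Projectivization.map_mk e.symm.toLinearMap e.symm.injective _ _]
      exact projmk_congr (e.symm_apply_apply x.rep) _ _
    simpa [x.mk_rep] using h
  right_inv x := by
    have h : Projectivization.map e.toLinearMap e.injective
        (Projectivization.map e.symm.toLinearMap e.symm.injective
          (Projectivization.mk K x.rep x.rep_nonzero)) =
        Projectivization.mk K x.rep x.rep_nonzero := by
      rw [Projectivization.map_mk e.symm.toLinearMap e.symm.injective x.rep x.rep_nonzero,
        Projectivization.map_mk e.toLinearMap e.injective _ _]
      exact projmk_congr (e.apply_symm_apply x.rep) _ _
    simpa [x.mk_rep] using h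

@[simp] theorem projCongr_mk {K V W : Type*} [Field K] [AddCommGroup V] [Module K V]
    [AddCommGroup W] [Module K W] (e : V ≃ₗ[K] W) (v : V) (hv : v ≠ 0) :
    projCongr e (Projectivization.mk K v hv) =
      Projectivization.mk K (e v) (by simp [hv]) := by
  exact Projectivization.map_mk e.toLinearMap e.injective v hv

theorem projCongr_apply_rep {K V W : Type*} [Field K] [AddCommGroup V] [Module K V]
    [AddCommGroup W] [Module K W] (e : V ≃ₗ[K] W) (x : Projectivization K V) :
    projCongr e x = Projectivization.mk K (e x.rep)
      (by simpa using x.rep_nonzero) := by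
  conv_lhs => rw [← x.mk_rep, projCongr_mk]

noncomputable def glOf {K : Type*} [Field K] (f : (Fin 2 → K) ≃ₗ[K] (Fin 2 → K)) :
    GL (Fin 2) K :=
  Matrix.GeneralLinearGroup.toLin.symm (LinearMap.GeneralLinearGroup.ofLinearEquiv f)

theorem pglAct_glOf {K : Type*} [Field K] (f : (Fin 2 → K) ≃ₗ[K] (Fin 2 → K)) :
    pglAct (glOf f) = ⇑(projCongr f) := by
  funext x
  refine projmap_congr ?_ _ f.injective x
  rw [glOf, MulEquiv.apply_symm_apply]
  rfl

/-- the standard point with a 1 in coordinate `i` -/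
def pti (K : Type*) [Field K] (i : Fin 2) : Projectivization K (Fin 2 → K) :=
  Projectivization.mk K (Pi.single i 1) (by
    intro h
    have := congrFun h i
    simp at this)

section scal

variable {K : Type*} [Field K]

/-- scaling coordinate 0 by a unit -/
def scalAct (a : Kˣ) : (Fin 2 → K) ≃ₗ[K] (Fin 2 → K) :=
  LinearEquiv.piCongrRight (fun i => LinearEquiv.smulOfUnit (if i = 0 then a else 1))

theorem scalAct_apply (a : Kˣ) (v : Fin 2 → K) (i : Fin 2) :
    scalAct a v i = (if i = 0 then (a : K) else 1) * v i := by
  simp [scalAct, LinearEquiv.smulOfUnit, DistribMulAction.toLinearEquiv,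
    DistribMulAction.toLinearMap, Units.smul_def]

theorem scalAct_symm (a : Kˣ) : (scalAct a).symm = scalAct a⁻¹ := by
  refine DFunLike.ext _ _ fun v => ?_
  rw [LinearEquiv.symm_apply_eq]
  funext i
  rw [scalAct_apply, scalAct_apply]
  rcases eq_or_ne i 0 with h | h <;> simp [h]

end scal

section pts

variable {K : Type*} [Field K]

theorem two_ne0 (v : Fin 2 → K) (hv : v ≠ 0) (h1 : v 1 = 0) : v 0 ≠ 0 := by
  intro h0
  exact hv (by funext i; fin_cases i <;> assumption)

theorem two_ne1 (v : Fin 2 → K) (hv : v ≠ 0) (h0 : v 0 = 0) : v 1 ≠ 0 := by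
  intro h1
  exact hv (by funext i; fin_cases i <;> assumption)

theorem mk_eq_pti0_iff (w : Fin 2 → K) (hw : w ≠ 0) :
    Projectivization.mk K w hw = pti K 0 ↔ w 1 = 0 := by
  rw [pti, Projectivization.mk_eq_mk_iff']
  constructor
  · rintro ⟨a, rfl⟩
    simp
  · intro h
    refine ⟨w 0, ?_⟩
    funext i
    fin_cases i <;> simp [h]

theorem mk_eq_pti1_iff (w : Fin 2 → K) (hw : w ≠ 0) :
    Projectivization.mk K w hw = pti K 1 ↔ w 0 = 0 := by
  rw [pti, Projectivization.mk_eq_mk_iff']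
  constructor
  · rintro ⟨a, rfl⟩
    simp
  · intro h
    refine ⟨w 1, ?_⟩
    funext i
    fin_cases i <;> simp [h]

theorem pti_ne : pti K 0 ≠ pti K 1 := by
  intro h
  rw [pti, mk_eq_pti1_iff] at h
  simp at h

theorem eq_pti0_iff (z : Projectivization K (Fin 2 → K)) :
    z = pti K 0 ↔ z.rep 1 = 0 := by
  conv_lhs => rw [← z.mk_rep]
  exact mk_eq_pti0_iff _ z.rep_nonzero

theorem eq_pti1_iff (z : Projectivization K (Fin 2 → K)) :
    z = pti K 1 ↔ z.rep 0 = 0 := by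
  conv_lhs => rw [← z.mk_rep]
  exact mk_eq_pti1_iff _ z.rep_nonzero

theorem scal_fix0 (a : Kˣ) : projCongr (scalAct a) (pti K 0) = pti K 0 := by
  rw [pti, projCongr_mk, Projectivization.mk_eq_mk_iff']
  refine ⟨(a : K), ?_⟩
  funext i
  fin_cases i <;> simp [scalAct_apply]

theorem scal_fix1 (a : Kˣ) : projCongr (scalAct a) (pti K 1) = pti K 1 := by
  rw [pti, projCongr_mk, Projectivization.mk_eq_mk_iff']
  refine ⟨1, ?_⟩
  funext i
  fin_cases i <;> simp [scalAct_apply]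

end pts

section theta

variable {K : Type*} [Field K]

theorem theta_inj (x : Projectivization K (Fin 2 → K))
    (h0 : x.rep 0 ≠ 0) (h1 : x.rep 1 ≠ 0) :
    Function.Injective (fun a : Kˣ => projCongr (scalAct a) x) := by
  intro a a' h
  have h' : projCongr (scalAct a) x = projCongr (scalAct a') x := h
  rw [projCongr_apply_rep, projCongr_apply_rep, Projectivization.mk_eq_mk_iff] at h'
  obtain ⟨u, hu⟩ := h'
  have e1 : (u : K) * x.rep 1 = x.rep 1 := by
    simpa [scalAct_apply, Units.smul_def] using congrFun hu 1
  have e0 : (u : K) * ((a' : K) * x.rep 0) = (a : K) * x.rep 0 := by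
    simpa [scalAct_apply, Units.smul_def] using congrFun hu 0
  have hu1 : (u : K) = 1 := by
    have e1' : (u : K) * x.rep 1 = 1 * x.rep 1 := by rw [one_mul]; exact e1
    exact mul_right_cancel₀ h1 e1'
  rw [hu1, one_mul] at e0
  exact (Units.ext (mul_right_cancel₀ h0 e0)).symm

theorem theta_image [Fintype K] [DecidableEq K] [Fintype (Projectivization K (Fin 2 → K))]
    [DecidableEq (Projectivization K (Fin 2 → K))]
    (x : Projectivization K (Fin 2 → K)) (h0 : x.rep 0 ≠ 0) (h1 : x.rep 1 ≠ 0) :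
    Finset.univ.image (fun a : Kˣ => projCongr (scalAct a) x) =
      Finset.univ.filter (fun z => z ≠ pti K 0 ∧ z ≠ pti K 1) := by
  ext z
  simp only [Finset.mem_image, Finset.mem_filter, Finset.mem_univ, true_and]
  constructor
  · rintro ⟨a, -, rfl⟩
    rw [projCongr_apply_rep]
    constructor
    · rw [Ne, mk_eq_pti0_iff]
      simp only [scalAct_apply]
      simpa using h1
    · rw [Ne, mk_eq_pti1_iff]
      simp only [scalAct_apply, if_pos rfl]
      exact mul_ne_zero a.ne_zero h0
  · rintro ⟨hz0, hz1⟩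
    rw [Ne, eq_pti0_iff] at hz0
    rw [Ne, eq_pti1_iff] at hz1
    set c : K := x.rep 1 * (z.rep 1)⁻¹ with hc
    have hcne : c ≠ 0 := mul_ne_zero h1 (inv_ne_zero hz0)
    have hane : c * z.rep 0 * (x.rep 0)⁻¹ ≠ 0 :=
      mul_ne_zero (mul_ne_zero hcne hz1) (inv_ne_zero h0)
    refine ⟨Units.mk0 _ hane, ?_⟩
    rw [projCongr_apply_rep]
    conv_rhs => rw [← z.mk_rep]
    rw [Projectivization.mk_eq_mk_iff']
    refine ⟨c, ?_⟩
    funext i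
    fin_cases i <;>
      simp only [Pi.smul_apply, smul_eq_mul, scalAct_apply, Units.val_mk0] <;> norm_num
    · exact (inv_mul_cancel_right₀ h0 _).symm
    · rw [hc]
      exact inv_mul_cancel_right₀ hz0 _

end theta

section move

variable {K : Type*} [Field K]

theorem exists_move (x y : Projectivization K (Fin 2 → K)) (hxy : x ≠ y) :
    ∃ f : (Fin 2 → K) ≃ₗ[K] (Fin 2 → K),
      projCongr f x = pti K 0 ∧ projCongr f y = pti K 1 := by
  have li : LinearIndependent K ![x.rep, y.rep] := by
    rw [linearIndependent_fin2]
    refine ⟨y.rep_nonzero, fun a ha => ?_⟩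
    apply hxy
    rw [← x.mk_rep, ← y.mk_rep, Projectivization.mk_eq_mk_iff']
    exact ⟨a, by simpa using ha⟩
  have hcard : Fintype.card (Fin 2) = Module.finrank K (Fin 2 → K) := by
    simp
  let bas := basisOfLinearIndependentOfCardEqFinrank li hcard
  have hbas : ⇑bas = ![x.rep, y.rep] := coe_basisOfLinearIndependentOfCardEqFinrank li hcard
  refine ⟨bas.equivFun, ?_, ?_⟩
  · rw [projCongr_apply_rep]
    have hx : x.rep = bas 0 := by rw [hbas]; rfl
    rw [mk_eq_pti0_iff, hx, bas.equivFun_self]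
    simp
  · rw [projCongr_apply_rep]
    have hy : y.rep = bas 1 := by rw [hbas]; rfl
    rw [mk_eq_pti1_iff, hy, bas.equivFun_self]
    simp

end move

section img

variable {K : Type*} [Field K]

theorem projCongr_symm_apply (f : (Fin 2 → K) ≃ₗ[K] (Fin 2 → K))
    (x : Projectivization K (Fin 2 → K)) :
    (projCongr f).symm x = projCongr f.symm x := rfl

theorem mem_image_glOf [DecidableEq (Projectivization K (Fin 2 → K))]
    (b : Finset (Projectivization K (Fin 2 → K)))
    (f : (Fin 2 → K) ≃ₗ[K] (Fin 2 → K)) (x : Projectivization K (Fin 2 → K)) :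
    x ∈ b.image (pglAct (glOf f)) ↔ projCongr f.symm x ∈ b := by
  rw [pglAct_glOf]
  constructor
  · intro hx
    obtain ⟨y, hy, rfl⟩ := Finset.mem_image.1 hx
    rw [← projCongr_symm_apply]
    simpa using hy
  · intro h
    exact Finset.mem_image.2 ⟨_, h, by rw [← projCongr_symm_apply]; exact (projCongr f).apply_symm_apply x⟩

theorem card_proj (K : Type*) [Field K] [Fintype K]
    [Fintype (Projectivization K (Fin 2 → K))] :
    Fintype.card (Projectivization K (Fin 2 → K)) = Fintype.card K + 1 := by
  classical
  have e : Projectivization K (Fin 2 → K) ≃ OnePoint K :=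
    (OnePoint.equivProjectivization K).symm
  rw [Fintype.card_congr e]
  exact Fintype.card_option

end img

section sumvec

variable {K : Type*} [Field K] [Fintype K] [DecidableEq K]
variable [Fintype (Projectivization K (Fin 2 → K))]
variable [DecidableEq (Projectivization K (Fin 2 → K))]

theorem smul_odd_card (hodd : Odd (Fintype.card Kˣ)) (c : ZMod 2) :
    (Fintype.card Kˣ) • c = c := by
  obtain ⟨t, ht⟩ := hodd
  rw [ht, add_nsmul, one_nsmul, mul_comm, mul_nsmul, two_nsmul,
    CharTwo.add_self_eq_zero, zero_add]

theorem sumvec_eval (hodd : Odd (Fintype.card Kˣ))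
    (b : Finset (Projectivization K (Fin 2 → K))) (x : Projectivization K (Fin 2 → K)) :
    (∑ a : Kˣ, if x ∈ b.image (pglAct (glOf (scalAct a))) then (1 : ZMod 2) else 0) =
    if x = pti K 0 then (if pti K 0 ∈ b then 1 else 0)
    else if x = pti K 1 then (if pti K 1 ∈ b then 1 else 0)
    else ((b.filter (fun z => z ≠ pti K 0 ∧ z ≠ pti K 1)).card : ZMod 2) := by
  have hsummand : ∀ a : Kˣ,
      (if x ∈ b.image (pglAct (glOf (scalAct a))) then (1 : ZMod 2) else 0)
      = (if projCongr (scalAct a⁻¹) x ∈ b then 1 else 0) := by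
    intro a
    exact if_congr ((mem_image_glOf b _ x).trans (by rw [scalAct_symm])) rfl rfl
  rw [Finset.sum_congr rfl (fun a _ => hsummand a)]
  have hre : (∑ a : Kˣ, if projCongr (scalAct a⁻¹) x ∈ b then (1 : ZMod 2) else 0)
      = ∑ a : Kˣ, if projCongr (scalAct a) x ∈ b then 1 else 0 := by
    refine Fintype.sum_equiv (Equiv.inv Kˣ) _ _ (fun a => ?_)
    simp
  rw [hre]
  by_cases hx0 : x = pti K 0
  · subst hx0
    rw [if_pos rfl]
    calc (∑ a : Kˣ, if projCongr (scalAct a) (pti K 0) ∈ b then (1 : ZMod 2) else 0)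
        = ∑ a : Kˣ, (if pti K 0 ∈ b then (1 : ZMod 2) else 0) := by
          refine Finset.sum_congr rfl fun a _ => by rw [scal_fix0]
      _ = (Fintype.card Kˣ) • (if pti K 0 ∈ b then (1 : ZMod 2) else 0) := by
          rw [Finset.sum_const, Finset.card_univ]
      _ = _ := smul_odd_card hodd _
  rw [if_neg hx0]
  by_cases hx1 : x = pti K 1
  · subst hx1
    rw [if_pos rfl]
    calc (∑ a : Kˣ, if projCongr (scalAct a) (pti K 1) ∈ b then (1 : ZMod 2) else 0)
        = ∑ a : Kˣ, (if pti K 1 ∈ b then (1 : ZMod 2) else 0) := by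
          refine Finset.sum_congr rfl fun a _ => by rw [scal_fix1]
      _ = (Fintype.card Kˣ) • (if pti K 1 ∈ b then (1 : ZMod 2) else 0) := by
          rw [Finset.sum_const, Finset.card_univ]
      _ = _ := smul_odd_card hodd _
  rw [if_neg hx1]
  have h0 : x.rep 0 ≠ 0 := fun h => hx1 ((eq_pti1_iff x).2 h)
  have h1 : x.rep 1 ≠ 0 := fun h => hx0 ((eq_pti0_iff x).2 h)
  have hinj : ∀ y ∈ Finset.univ, ∀ z ∈ Finset.univ,
      (fun a : Kˣ => projCongr (scalAct a) x) y = (fun a : Kˣ => projCongr (scalAct a) x) z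
      → y = z := fun y _ z _ h => theta_inj x h0 h1 h
  have himg := Finset.sum_image (s := Finset.univ)
    (g := fun a : Kˣ => projCongr (scalAct a) x)
    (f := fun z => if z ∈ b then (1 : ZMod 2) else 0) hinj
  rw [← himg, theta_image x h0 h1]
  rw [Finset.sum_boole]
  congr 1
  rw [Finset.filter_filter]
  congr 1
  ext z
  simp only [Finset.mem_filter, Finset.mem_univ, true_and]
  tauto

end sumvec

section main

theorem cast_even_zmod2 {k : ℕ} (h : Even k) : (k : ZMod 2) = 0 := by
  obtain ⟨t, rfl⟩ := h
  push_cast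
  rw [CharTwo.add_self_eq_zero]

theorem cast_odd_zmod2 {k : ℕ} (h : Odd k) : (k : ZMod 2) = 1 := by
  obtain ⟨t, rfl⟩ := h
  push_cast
  rw [two_mul, CharTwo.add_self_eq_zero, zero_add]

/-- Let `q = 2^m` with `m ≥ 2`, `1 ≤ k ≤ 2^m`, and let `B` be a nonempty collection of
`k`-subsets of `PG(1, GF(2^m))` invariant under `PGL_2(GF(2^m))`. Then the 2-rank of the
incidence matrix of `(PG(1, GF(2^m)), B)` equals `2^m` if `k` is even and `2^m + 1` if `k`
is odd. -/
theorem stmt8 (m q k : ℕ) (hm : 2 ≤ m) (hq : q = 2 ^ m) (hk1 : 1 ≤ k) (hkq : k ≤ q)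
    (K : Type*) [Field K] [Fintype K] (hK : Fintype.card K = q)
    [Fintype (Projectivization K (Fin 2 → K))] [DecidableEq (Projectivization K (Fin 2 → K))]
    (B : Finset (Finset (Projectivization K (Fin 2 → K)))) (hBne : B.Nonempty)
    (hcard : ∀ b ∈ B, b.card = k)
    (hinv : ∀ M : GL (Fin 2) K, ∀ b ∈ B, b.image (pglAct M) ∈ B) :
    (Matrix.of fun (b : {b // b ∈ B}) (x : Projectivization K (Fin 2 → K)) =>
        if x ∈ b.1 then (1 : ZMod 2) else 0).rank = if Even k then q else q + 1 := by
  letI : DecidableEq K := Classical.decEq K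
  -- numerics
  have hqeven : Even q := by
    subst hq
    exact Nat.even_pow.mpr ⟨even_iff_two_dvd.mpr dvd_rfl, by omega⟩
  have hq1 : 1 ≤ q := by subst hq; exact Nat.one_le_two_pow
  have hcardP : Fintype.card (Projectivization K (Fin 2 → K)) = q + 1 := by rw [card_proj, hK]
  have hodd : Odd (Fintype.card Kˣ) := by
    rw [Fintype.card_units, hK]
    exact Nat.Even.sub_odd hq1 hqeven odd_one
  -- the rows and their span
  set R : {b // b ∈ B} → (Projectivization K (Fin 2 → K) → ZMod 2) :=
    fun b x => if x ∈ b.1 then (1 : ZMod 2) else 0 with hR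
  set C : Submodule (ZMod 2) (Projectivization K (Fin 2 → K) → ZMod 2) := Submodule.span (ZMod 2) (Set.range R) with hC
  have row_mem : ∀ c : Finset (Projectivization K (Fin 2 → K)), c ∈ B →
      (fun x => if x ∈ c then (1 : ZMod 2) else 0) ∈ C :=
    fun c hc => Submodule.subset_span ⟨⟨c, hc⟩, rfl⟩
  -- invariance of C
  have inv_mem : ∀ f : (Fin 2 → K) ≃ₗ[K] (Fin 2 → K), ∀ v ∈ C,
      (fun x => v (projCongr f x)) ∈ C := by
    intro f v hv
    set T : (Projectivization K (Fin 2 → K) → ZMod 2) →ₗ[ZMod 2] (Projectivization K (Fin 2 → K) → ZMod 2) :=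
      LinearMap.funLeft (ZMod 2) (ZMod 2) (projCongr f) with hT
    have hgen : C ≤ Submodule.comap T C := by
      rw [hC]
      refine Submodule.span_le.2 ?_
      rintro _ ⟨c, rfl⟩
      have heq : T (R c) =
          (fun x => if x ∈ (c.1.image (pglAct (glOf f.symm))) then (1 : ZMod 2) else 0) := by
        funext x
        have hiff : projCongr f x ∈ c.1 ↔ x ∈ c.1.image (pglAct (glOf f.symm)) := by
          rw [mem_image_glOf]
          constructor
          · intro h
            rwa [LinearEquiv.symm_symm]
          · intro h
            rwa [LinearEquiv.symm_symm] at h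
        exact if_congr hiff rfl rfl
      show T (R c) ∈ C
      rw [heq]
      exact row_mem _ (hinv (glOf f.symm) c.1 c.2)
    exact hgen hv
  -- the summed vector for a block
  have sumv : ∀ c ∈ B, ∀ x : Projectivization K (Fin 2 → K),
      ((∑ a : Kˣ, fun y =>
          if y ∈ c.image (pglAct (glOf (scalAct a))) then (1 : ZMod 2) else 0) ∈ C) ∧
      ((∑ a : Kˣ, fun y =>
          if y ∈ c.image (pglAct (glOf (scalAct a))) then (1 : ZMod 2) else 0) x =
        if x = pti K 0 then (if pti K 0 ∈ c then 1 else 0)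
        else if x = pti K 1 then (if pti K 1 ∈ c then 1 else 0)
        else ((c.filter (fun z => z ≠ pti K 0 ∧ z ≠ pti K 1)).card : ZMod 2)) := by
    intro c hc x
    constructor
    · exact Submodule.sum_mem _ (fun a _ => row_mem _ (hinv (glOf (scalAct a)) c hc))
    · rw [Finset.sum_apply]
      exact sumvec_eval hodd c x
  -- existence of suitable blocks
  obtain ⟨b0, hb0⟩ := hBne
  have hb0card : b0.card = k := hcard b0 hb0
  obtain ⟨p, hp⟩ := Finset.card_pos.mp (by rw [hb0card]; omega)
  have hex : ∃ p' : Projectivization K (Fin 2 → K), p' ∉ b0 := by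
    by_contra h
    push_neg at h
    have : Fintype.card (Projectivization K (Fin 2 → K)) ≤ b0.card := by
      rw [← Finset.card_univ]
      exact Finset.card_le_card (fun z _ => h z)
    omega
  obtain ⟨p', hp'⟩ := hex
  have hne : p ≠ p' := fun h => hp' (h ▸ hp)
  -- block containing pt0 but not pt1
  obtain ⟨f1, hf1, hf1'⟩ := exists_move p p' hne
  set b1 : Finset (Projectivization K (Fin 2 → K)) := b0.image (pglAct (glOf f1)) with hb1def
  have hb1B : b1 ∈ B := hinv _ _ hb0
  have hb1_0 : pti K 0 ∈ b1 := by
    rw [hb1def, mem_image_glOf, ← hf1, ← projCongr_symm_apply, Equiv.symm_apply_apply]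
    exact hp
  have hb1_1 : pti K 1 ∉ b1 := by
    rw [hb1def, mem_image_glOf, ← hf1', ← projCongr_symm_apply, Equiv.symm_apply_apply]
    exact hp'
  -- block containing pt1 but not pt0
  obtain ⟨f2, hf2, hf2'⟩ := exists_move p' p hne.symm
  set b2 : Finset (Projectivization K (Fin 2 → K)) := b0.image (pglAct (glOf f2)) with hb2def
  have hb2B : b2 ∈ B := hinv _ _ hb0
  have hb2_1 : pti K 1 ∈ b2 := by
    rw [hb2def, mem_image_glOf, ← hf2', ← projCongr_symm_apply, Equiv.symm_apply_apply]
    exact hp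
  have hb2_0 : pti K 0 ∉ b2 := by
    rw [hb2def, mem_image_glOf, ← hf2, ← projCongr_symm_apply, Equiv.symm_apply_apply]
    exact hp'
  -- filter cardinalities
  have hfiltercard : ∀ c ∈ B, (pti K 0 ∈ c ∧ pti K 1 ∉ c) ∨ (pti K 1 ∈ c ∧ pti K 0 ∉ c) →
      ((c.filter (fun z => z ≠ pti K 0 ∧ z ≠ pti K 1)).card : ZMod 2) = (k : ZMod 2) + 1 := by
    intro c hc hcase
    have hnegfilter : c.filter (fun z => ¬(z ≠ pti K 0 ∧ z ≠ pti K 1)) =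
        (if pti K 0 ∈ c then {pti K 0} else {pti K 1}) := by
      rcases hcase with ⟨h0, h1⟩ | ⟨h1, h0⟩
      · rw [if_pos h0]
        ext z
        simp only [Finset.mem_filter, Finset.mem_singleton, not_and_or, not_not]
        constructor
        · rintro ⟨hzc, hz0 | hz1⟩
          · exact hz0
          · exact absurd (hz1 ▸ hzc) h1
        · rintro rfl
          exact ⟨h0, Or.inl rfl⟩
      · rw [if_neg h0]
        ext z
        simp only [Finset.mem_filter, Finset.mem_singleton, not_and_or, not_not]
        constructor
        · rintro ⟨hzc, hz0 | hz1⟩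
          · exact absurd (hz0 ▸ hzc) h0
          · exact hz1
        · rintro rfl
          exact ⟨h1, Or.inr rfl⟩
    have hsplit := Finset.card_filter_add_card_filter_not
      (s := c) (p := fun z => z ≠ pti K 0 ∧ z ≠ pti K 1)
    rw [hnegfilter, hcard c hc] at hsplit
    have hone : (if pti K 0 ∈ c then ({pti K 0} : Finset (Projectivization K (Fin 2 → K))) else {pti K 1}).card = 1 := by
      split <;> simp
    rw [hone] at hsplit
    have hcast := congrArg (Nat.cast : ℕ → ZMod 2) hsplit
    push_cast at hcast
    have := CharTwo.add_self_eq_zero (R := ZMod 2) 1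
    linear_combination hcast - this
  -- the two key vectors
  set v1 : Projectivization K (Fin 2 → K) → ZMod 2 := ∑ a : Kˣ, fun y =>
      if y ∈ b1.image (pglAct (glOf (scalAct a))) then (1 : ZMod 2) else 0 with hv1def
  set v2 : Projectivization K (Fin 2 → K) → ZMod 2 := ∑ a : Kˣ, fun y =>
      if y ∈ b2.image (pglAct (glOf (scalAct a))) then (1 : ZMod 2) else 0 with hv2def
  have hv1mem : v1 ∈ C := (sumv b1 hb1B (pti K 0)).1
  have hv2mem : v2 ∈ C := (sumv b2 hb2B (pti K 0)).1
  have hv1x : ∀ x, v1 x = if x = pti K 0 then 1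
      else if x = pti K 1 then 0 else (k : ZMod 2) + 1 := by
    intro x
    rw [hv1def, (sumv b1 hb1B x).2, if_pos hb1_0, if_neg hb1_1,
      hfiltercard b1 hb1B (Or.inl ⟨hb1_0, hb1_1⟩)]
  have hv2x : ∀ x, v2 x = if x = pti K 0 then 0
      else if x = pti K 1 then 1 else (k : ZMod 2) + 1 := by
    intro x
    rw [hv2def, (sumv b2 hb2B x).2, if_neg hb2_0, if_pos hb2_1,
      hfiltercard b2 hb2B (Or.inr ⟨hb2_1, hb2_0⟩)]
  -- rank as finrank of row span
  have hrank : (Matrix.of R).rank = Module.finrank (ZMod 2) C :=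
    Matrix.rank_eq_finrank_span_row _
  have hfinrank_pi : Module.finrank (ZMod 2) (Projectivization K (Fin 2 → K) → ZMod 2)
      = q + 1 := by
    rw [Module.finrank_pi, hcardP]
  rcases Nat.even_or_odd k with hke | hko
  · -- EVEN CASE
    rw [if_pos hke]
    have hk2 : (k : ZMod 2) = 0 := cast_even_zmod2 hke
    have hw : (fun x => (if x = pti K 0 then (1 : ZMod 2) else 0)
        + (if x = pti K 1 then 1 else 0)) ∈ C := by
      have hsum := Submodule.add_mem C hv1mem hv2mem
      have heq : v1 + v2 = fun x => (if x = pti K 0 then (1 : ZMod 2) else 0)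
          + (if x = pti K 1 then 1 else 0) := by
        funext x
        rw [Pi.add_apply, hv1x x, hv2x x]
        by_cases h0 : x = pti K 0
        · rw [if_pos h0, if_pos h0, if_pos h0]
          have h1 : ¬(x = pti K 1) := fun h => pti_ne (h0 ▸ h)
          rw [if_neg h1]
        · rw [if_neg h0, if_neg h0, if_neg h0]
          by_cases h1 : x = pti K 1
          · rw [if_pos h1, if_pos h1, if_pos h1]
          · rw [if_neg h1, if_neg h1, if_neg h1, hk2]
            decide
      rwa [heq] at hsum
    have pair_mem : ∀ y z : Projectivization K (Fin 2 → K), y ≠ z →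
        (fun x => (if x = y then (1 : ZMod 2) else 0) + (if x = z then 1 else 0)) ∈ C := by
      intro y z hyz
      obtain ⟨f, hfy, hfz⟩ := exists_move y z hyz
      have hmem := inv_mem f _ hw
      have heq : (fun x => (if projCongr f x = pti K 0 then (1 : ZMod 2) else 0)
          + (if projCongr f x = pti K 1 then 1 else 0))
          = fun x => (if x = y then (1 : ZMod 2) else 0) + (if x = z then 1 else 0) := by
        funext x
        have hy : projCongr f x = pti K 0 ↔ x = y := by
          rw [← hfy]
          exact ⟨fun h => (projCongr f).injective h, fun h => by rw [h]⟩
        have hz : projCongr f x = pti K 1 ↔ x = z := by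
          rw [← hfz]
          exact ⟨fun h => (projCongr f).injective h, fun h => by rw [h]⟩
        rw [if_congr hy rfl rfl, if_congr hz rfl rfl]
      rwa [heq] at hmem
    -- upper bound via the all-ones functional
    set φ : (Projectivization K (Fin 2 → K) → ZMod 2) →ₗ[ZMod 2] ZMod 2 :=
      ∑ x : Projectivization K (Fin 2 → K), LinearMap.proj x with hφdef
    have hφapp : ∀ v, φ v = ∑ x : Projectivization K (Fin 2 → K), v x := by
      intro v
      rw [hφdef, LinearMap.sum_apply]
      rfl
    have hCker : C ≤ LinearMap.ker φ := by
      rw [hC]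
      refine Submodule.span_le.2 ?_
      rintro _ ⟨c, rfl⟩
      rw [SetLike.mem_coe, LinearMap.mem_ker, hφapp]
      have : ∑ x : Projectivization K (Fin 2 → K), R c x
          = ((c.1.card : ℕ) : ZMod 2) := by
        rw [hR]
        simp only [Finset.sum_ite_mem, Finset.univ_inter, Finset.sum_const, nsmul_eq_mul,
          mul_one]
      rw [this, hcard c.1 c.2, hk2]
    have hφsurj : Function.Surjective φ := by
      intro t
      refine ⟨fun x => if x = pti K 0 then t else 0, ?_⟩
      rw [hφapp, Finset.sum_ite_eq' Finset.univ (pti K 0) (fun _ => t)]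
      simp
    have hkerrank : Module.finrank (ZMod 2) (LinearMap.ker φ) = q := by
      have hrn := LinearMap.finrank_range_add_finrank_ker φ
      rw [hfinrank_pi, LinearMap.range_eq_top.2 hφsurj, finrank_top, Module.finrank_self] at hrn
      omega
    have hupper : Module.finrank (ZMod 2) C ≤ q := by
      rw [← hkerrank]
      exact Submodule.finrank_mono hCker
    -- lower bound via restriction to the complement of pt0
    set Φ : (Projectivization K (Fin 2 → K) → ZMod 2) →ₗ[ZMod 2]
        ({z : Projectivization K (Fin 2 → K) // z ≠ pti K 0} → ZMod 2) :=
      LinearMap.funLeft (ZMod 2) (ZMod 2) Subtype.val with hΦdef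
    have hmaptop : Submodule.map Φ C = ⊤ := by
      rw [eq_top_iff]
      intro v _
      rw [pi_eq_sum_univ v]
      refine Submodule.sum_mem _ fun y _ => Submodule.smul_mem _ _ ?_
      refine ⟨fun x => (if x = y.val then (1 : ZMod 2) else 0)
        + (if x = pti K 0 then 1 else 0), pair_mem _ _ y.prop, ?_⟩
      funext j
      show (if (j : Projectivization K (Fin 2 → K)) = y.val then (1 : ZMod 2) else 0)
        + (if (j : Projectivization K (Fin 2 → K)) = pti K 0 then 1 else 0)
        = if y = j then 1 else 0
      rw [if_neg j.prop, add_zero]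
      refine if_congr ?_ rfl rfl
      rw [← Subtype.ext_iff]
      exact eq_comm
    have hcards : Fintype.card {z : Projectivization K (Fin 2 → K) // z ≠ pti K 0} = q := by
      have := Fintype.card_subtype_compl (fun z : Projectivization K (Fin 2 → K) => z = pti K 0)
      rw [Fintype.card_subtype_eq, hcardP] at this
      rw [this]
      omega
    have hlower : q ≤ Module.finrank (ZMod 2) C := by
      calc q = Module.finrank (ZMod 2)
            ({z : Projectivization K (Fin 2 → K) // z ≠ pti K 0} → ZMod 2) := by
              rw [Module.finrank_pi, hcards]
        _ = Module.finrank (ZMod 2) (⊤ : Submodule (ZMod 2)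
            ({z : Projectivization K (Fin 2 → K) // z ≠ pti K 0} → ZMod 2)) := by
              rw [finrank_top]
        _ = Module.finrank (ZMod 2) (Submodule.map Φ C) := by rw [hmaptop]
        _ ≤ Module.finrank (ZMod 2) C := Submodule.finrank_map_le Φ C
    rw [hrank]
    omega
  · -- ODD CASE
    rw [if_neg (Nat.not_even_iff_odd.2 hko)]
    have hk2 : (k : ZMod 2) = 1 := cast_odd_zmod2 hko
    have hE1 : (fun x => if x = pti K 0 then (1 : ZMod 2) else 0) ∈ C := by
      have heq : v1 = fun x => if x = pti K 0 then (1 : ZMod 2) else 0 := by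
        funext x
        rw [hv1x x]
        by_cases h0 : x = pti K 0
        · rw [if_pos h0, if_pos h0]
        · rw [if_neg h0, if_neg h0]
          by_cases h1 : x = pti K 1
          · rw [if_pos h1]
          · rw [if_neg h1, hk2]
            decide
      rwa [heq] at hv1mem
    have single_mem : ∀ y : Projectivization K (Fin 2 → K),
        (fun x => if x = y then (1 : ZMod 2) else 0) ∈ C := by
      intro y
      have hzex : ∃ z, y ≠ z := by
        by_cases hy : y = pti K 0
        · exact ⟨pti K 1, fun h => pti_ne (hy ▸ h)⟩
        · exact ⟨pti K 0, hy⟩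
      obtain ⟨z, hyz⟩ := hzex
      obtain ⟨f, hfy, -⟩ := exists_move y z hyz
      have hmem := inv_mem f _ hE1
      have heq : (fun x => if projCongr f x = pti K 0 then (1 : ZMod 2) else 0)
          = fun x => if x = y then (1 : ZMod 2) else 0 := by
        funext x
        refine if_congr ?_ rfl rfl
        rw [← hfy]
        exact ⟨fun h => (projCongr f).injective h, fun h => by rw [h]⟩
      rwa [heq] at hmem
    have hCtop : C = ⊤ := by
      rw [eq_top_iff]
      intro v _
      rw [pi_eq_sum_univ v]
      refine Submodule.sum_mem _ fun y _ => Submodule.smul_mem _ _ ?_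
      have heq : (fun j => if y = j then (1 : ZMod 2) else 0)
          = fun j => if j = y then (1 : ZMod 2) else 0 :=
        funext fun j => if_congr eq_comm rfl rfl
      rw [heq]
      exact single_mem y
    rw [hrank, hCtop, finrank_top, hfinrank_pi]


end main
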